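/- Suppose P contains d+1 affinely independent points. Then there exists an HDD median q of P that is an intersection point of d hyperplanes determined by P: there exist d-element affinely independent subsets s₁, …, s_d ∈ S_P such that the intersection of the affine spans of s₁, …, s_d is exactly the singleton {q}. -/

import Mathlib

open scoped Classical

open scoped RealInnerProductSpace

set_option maxHeartbeats 1000000


lemma abs_sub_eq_of_abs_le {u b : ℝ} (h : |u| ≤ |b|) :
    |u - b| = |b| - Real.sign b * u := by
  rcases lt_trichotomy b 0 with hb | hb | hb
  · rw [Real.sign_of_neg hb, abs_of_neg hb]
    have h1 : b ≤ u := by cases abs_cases u <;> cases abs_cases b <;> linarith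
    rw [abs_of_nonneg (by linarith)]; ring
  · subst hb
    have : u = 0 := by simpa using abs_nonpos_iff.mp (by simpa using h)
    simp [this]
  · rw [Real.sign_of_pos hb, abs_of_pos hb]
    have h1 : u ≤ b := by cases abs_cases u <;> cases abs_cases b <;> linarith
    rw [abs_of_nonpos (by linarith)]; ring

theorem hdd_abstract {d : ℕ} {ι : Type} [Fintype ι]
    (n : ι → EuclideanSpace ℝ (Fin d)) (c : ι → ℝ)
    (hspan : Submodule.span ℝ (Set.range n) = ⊤) :
    ∃ q : EuclideanSpace ℝ (Fin d),
      (∀ x, ∑ i, |⟪n i, q⟫ - c i| ≤ ∑ i, |⟪n i, x⟫ - c i|) ∧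
      Submodule.span ℝ (n '' {i | ⟪n i, q⟫ = c i}) = ⊤ := by
  classical
  set f : EuclideanSpace ℝ (Fin d) → ℝ := fun x => ∑ i, |⟪n i, x⟫ - c i| with hf
  have hcont : Continuous f := by
    apply continuous_finset_sum
    intro i _
    exact ((continuous_const.inner continuous_id).sub continuous_const).abs
  -- coercivity
  set L : EuclideanSpace ℝ (Fin d) →ₗ[ℝ] (ι → ℝ) :=
    LinearMap.pi (fun i => (innerSL ℝ (n i)).toLinearMap) with hL
  have hker : LinearMap.ker L = ⊥ := by
    rw [LinearMap.ker_eq_bot']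
    intro x hx
    have hx' : ∀ i, ⟪n i, x⟫ = 0 := fun i => congrFun hx i
    have htop : (⊤ : Submodule ℝ (EuclideanSpace ℝ (Fin d))) ≤ (ℝ ∙ x)ᗮ := by
      rw [← hspan]
      apply Submodule.span_le.mpr
      rintro - ⟨i, rfl⟩
      exact Submodule.mem_orthogonal_singleton_iff_inner_right.mpr
        (by rw [real_inner_comm]; exact hx' i)
    have := htop (Submodule.mem_top (x := x))
    have := Submodule.mem_orthogonal_singleton_iff_inner_right.mp this
    exact inner_self_eq_zero.mp this
  obtain ⟨K, hK0, hK⟩ := L.exists_antilipschitzWith hker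
  set C : ℝ := ∑ i, |c i| with hC
  have hbound : ∀ x, ‖x‖ / K - C ≤ f x := by
    intro x
    have h1 : ‖x‖ ≤ K * ‖L x‖ := by
      have := hK.le_mul_dist x 0
      simpa [dist_eq_norm] using this
    have h2 : ‖L x‖ ≤ ∑ i, |⟪n i, x⟫| := by
      rcases isEmpty_or_nonempty ι with hι | hι
      · simp [Subsingleton.elim (L x) 0]
      apply pi_norm_le_iff_of_nonneg (by positivity) |>.mpr
      intro i
      rw [show L x i = ⟪n i, x⟫ from rfl, Real.norm_eq_abs]
      exact Finset.single_le_sum (f := fun j => |⟪n j, x⟫|) (fun j _ => abs_nonneg _)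
        (Finset.mem_univ i)
    have h3 : ∑ i, |⟪n i, x⟫| ≤ f x + C := by
      rw [hf, hC, ← Finset.sum_add_distrib]
      apply Finset.sum_le_sum
      intro i _
      calc |⟪n i, x⟫| = |(⟪n i, x⟫ - c i) + c i| := by ring_nf
        _ ≤ |⟪n i, x⟫ - c i| + |c i| := abs_add_le _ _
    have hKpos : (0:ℝ) < K := hK0
    rw [sub_le_iff_le_add, div_le_iff₀ hKpos]
    nlinarith [h1, h2, h3, hKpos,
      mul_le_mul_of_nonneg_left (le_trans h2 h3) (le_of_lt hKpos)]
  have hco : Filter.Tendsto f (Filter.cocompact _) Filter.atTop := by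
    apply Filter.tendsto_atTop_mono hbound
    have h1 : Filter.Tendsto (fun x : EuclideanSpace ℝ (Fin d) => ‖x‖ / K)
        (Filter.cocompact _) Filter.atTop :=
      tendsto_norm_cocompact_atTop.atTop_div_const hK0
    simpa [sub_eq_add_neg] using Filter.tendsto_atTop_add_const_right _ (-C) h1
  obtain ⟨q0, hq0⟩ := hcont.exists_forall_le hco
  -- induction on the corank of the span of normals of active hyperplanes
  have key : ∀ (k : ℕ) (q : EuclideanSpace ℝ (Fin d)), (∀ x, f q ≤ f x) →
      Module.finrank ℝ ((Submodule.span ℝ (n '' {i | ⟪n i, q⟫ = c i}))ᗮ) ≤ k →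
      ∃ q', (∀ x, f q' ≤ f x) ∧ Submodule.span ℝ (n '' {i | ⟪n i, q'⟫ = c i}) = ⊤ := by
    intro k
    induction k with
    | zero =>
      intro q hq hr
      refine ⟨q, hq, ?_⟩
      rw [← Submodule.orthogonal_eq_bot_iff]
      exact Submodule.finrank_eq_zero.mp (Nat.le_zero.mp hr)
    | succ k ih =>
      intro q hq hr
      by_cases hbot : (Submodule.span ℝ (n '' {i | ⟪n i, q⟫ = c i}))ᗮ = ⊥
      · exact ⟨q, hq, Submodule.orthogonal_eq_bot_iff.mp hbot⟩
      obtain ⟨v, hvmem, hv0⟩ := Submodule.exists_mem_ne_zero_of_ne_bot hbot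
      set a : ι → ℝ := fun i => ⟪n i, v⟫ with ha
      set b : ι → ℝ := fun i => c i - ⟪n i, q⟫ with hb
      have hTa : ∀ i, ⟪n i, q⟫ = c i → a i = 0 := by
        intro i hi
        have hni : n i ∈ Submodule.span ℝ (n '' {i | ⟪n i, q⟫ = c i}) :=
          Submodule.subset_span ⟨i, hi, rfl⟩
        have := (Submodule.mem_orthogonal _ v).mp hvmem (n i) hni
        rw [ha]; rw [← this]
      set A : Finset ι := Finset.univ.filter (fun i => a i ≠ 0) with hAdef
      have hAne : A.Nonempty := by
        by_contra hno
        rw [Finset.not_nonempty_iff_eq_empty, Finset.filter_eq_empty_iff] at hno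
        have hall : ∀ i, a i = 0 := fun i => not_not.mp (hno (Finset.mem_univ i))
        have htop : (⊤ : Submodule ℝ (EuclideanSpace ℝ (Fin d))) ≤ (ℝ ∙ v)ᗮ := by
          rw [← hspan]
          apply Submodule.span_le.mpr
          rintro - ⟨i, rfl⟩
          exact Submodule.mem_orthogonal_singleton_iff_inner_right.mpr
            (by rw [real_inner_comm]; exact hall i)
        have := htop (Submodule.mem_top (x := v))
        exact hv0 (inner_self_eq_zero.mp
          (Submodule.mem_orthogonal_singleton_iff_inner_right.mp this))
      obtain ⟨j, hjA, hjmin⟩ := A.exists_min_image (fun i => |b i / a i|) hAne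
      have haj : a j ≠ 0 := (Finset.mem_filter.mp hjA).2
      have hbj : b j ≠ 0 := by
        intro h0
        apply haj
        apply hTa
        rw [hb] at h0
        simp only at h0
        linarith [h0]
      set m : ℝ := |b j / a j| with hm
      have hmpos : 0 < m := abs_pos.mpr (div_ne_zero hbj haj)
      -- the key linear identity on [-m, m]
      have hid : ∀ t : ℝ, |t| ≤ m →
          f (q + t • v) = (∑ i, |b i|) - (∑ i, Real.sign (b i) * a i) * t := by
        intro t ht
        rw [hf]
        simp only
        have hterm : ∀ i : ι, |⟪n i, q + t • v⟫ - c i|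
            = |b i| - Real.sign (b i) * (a i * t) := by
          intro i
          have hinner : ⟪n i, q + t • v⟫ - c i = a i * t - b i := by
            rw [inner_add_right, real_inner_smul_right, ha, hb]; ring
          rw [hinner]
          apply abs_sub_eq_of_abs_le
          by_cases hai : a i = 0
          · simp [hai, abs_nonneg]
          · have hiA : i ∈ A := Finset.mem_filter.mpr ⟨Finset.mem_univ i, hai⟩
            have := hjmin i hiA
            calc |a i * t| = |a i| * |t| := abs_mul _ _
              _ ≤ |a i| * |b i / a i| := by
                  apply mul_le_mul_of_nonneg_left (le_trans ht this) (abs_nonneg _)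
              _ = |b i| := by rw [abs_div, mul_div_cancel₀ _ (abs_ne_zero.mpr hai)]
        rw [Finset.sum_congr rfl (fun i _ => hterm i)]
        rw [Finset.sum_sub_distrib]
        congr 1
        rw [Finset.sum_mul]
        exact Finset.sum_congr rfl fun i _ => by ring
      have hfq : f q = ∑ i, |b i| := by
        rw [hf]
        apply Finset.sum_congr rfl
        intro i _
        rw [hb]
        simp only
        rw [abs_sub_comm]
      set S : ℝ := ∑ i, Real.sign (b i) * a i with hS
      have hS0 : S = 0 := by
        have h1 := hq (q + m • v)
        have h2 := hq (q + (-m) • v)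
        rw [hid m (by rw [abs_of_pos hmpos])] at h1
        rw [hid (-m) (by rw [abs_neg, abs_of_pos hmpos])] at h2
        rw [hfq] at h1 h2
        have : S * m = 0 := by nlinarith
        exact (mul_eq_zero.mp this).resolve_right (ne_of_gt hmpos)
      set q' : EuclideanSpace ℝ (Fin d) := q + (b j / a j) • v with hq'def
      have hq' : ∀ x, f q' ≤ f x := by
        intro x
        rw [hq'def, hid (b j / a j) (le_of_eq hm.symm), hS0, zero_mul, sub_zero, ← hfq]
        exact hq x
      have hsub : ∀ i, ⟪n i, q⟫ = c i → ⟪n i, q'⟫ = c i := by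
        intro i hi
        rw [hq'def, inner_add_right, real_inner_smul_right]
        have : ⟪n i, v⟫ = 0 := hTa i hi
        rw [this, mul_zero, add_zero, hi]
      have hjnew : ⟪n j, q'⟫ = c j := by
        rw [hq'def, inner_add_right, real_inner_smul_right]
        have : (b j / a j) * ⟪n j, v⟫ = b j := by
          have hrw : (⟪n j, v⟫ : ℝ) = a j := rfl
          rw [hrw]; field_simp
        rw [this, hb]
        simp only
        ring
      have hlt : (Submodule.span ℝ (n '' {i | ⟪n i, q'⟫ = c i}))ᗮ
          < (Submodule.span ℝ (n '' {i | ⟪n i, q⟫ = c i}))ᗮ := by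
        apply lt_of_le_of_ne
        · apply Submodule.orthogonal_le
          apply Submodule.span_mono
          apply Set.image_mono
          intro i hi
          exact hsub i hi
        · intro heq
          have hnj : n j ∈ Submodule.span ℝ (n '' {i | ⟪n i, q'⟫ = c i}) :=
            Submodule.subset_span ⟨j, hjnew, rfl⟩
          have hv' : v ∈ (Submodule.span ℝ (n '' {i | ⟪n i, q'⟫ = c i}))ᗮ := by
            rw [heq]; exact hvmem
          have := (Submodule.mem_orthogonal _ v).mp hv' (n j) hnj
          exact haj this
      have hrk : Module.finrank ℝ ((Submodule.span ℝ (n '' {i | ⟪n i, q'⟫ = c i}))ᗮ) ≤ k := by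
        have := Submodule.finrank_lt_finrank_of_lt hlt
        omega
      exact ih q' hq' hrk
  exact key _ q0 hq0 le_rfl


/-- The set `S_P` of `d`-element affinely independent subsets of `P`;
each determines an affine hyperplane of `ℝ^d` (its affine span). -/
noncomputable def hddSet (d : ℕ) (P : Finset (EuclideanSpace ℝ (Fin d))) :
    Finset (Finset (EuclideanSpace ℝ (Fin d))) :=
  (P.powersetCard d).filter
    (fun s => AffineIndependent ℝ
      (fun x : (s : Set (EuclideanSpace ℝ (Fin d))) => (x : EuclideanSpace ℝ (Fin d))))

lemma hddSet_mem {d : ℕ} {P s : Finset (EuclideanSpace ℝ (Fin d))} :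
    s ∈ hddSet d P ↔ s ⊆ P ∧ s.card = d ∧ AffineIndependent ℝ
      (fun x : (s : Set (EuclideanSpace ℝ (Fin d))) => (x : EuclideanSpace ℝ (Fin d))) := by
  rw [hddSet, Finset.mem_filter, Finset.mem_powersetCard, and_assoc]

lemma exists_normal {d : ℕ} (hd : 1 ≤ d) {P : Finset (EuclideanSpace ℝ (Fin d))}
    {s : Finset (EuclideanSpace ℝ (Fin d))} (hs : s ∈ hddSet d P) :
    ∃ (n : EuclideanSpace ℝ (Fin d)) (c : ℝ),
      (∀ x, x ∈ affineSpan ℝ (s : Set (EuclideanSpace ℝ (Fin d))) ↔ ⟪n, x⟫ = c) ∧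
      (∀ x, Metric.infDist x
          ((affineSpan ℝ (s : Set (EuclideanSpace ℝ (Fin d)))) :
            Set (EuclideanSpace ℝ (Fin d))) = |⟪n, x⟫ - c|) ∧
      (∀ v, ⟪n, v⟫ = 0 → v ∈ vectorSpan ℝ (s : Set (EuclideanSpace ℝ (Fin d)))) := by
  classical
  obtain ⟨hsub, hcard, hai⟩ := hddSet_mem.mp hs
  obtain ⟨p, hp⟩ := Finset.card_pos.mp (by omega : 0 < s.card)
  set D := vectorSpan ℝ (s : Set (EuclideanSpace ℝ (Fin d))) with hD
  have hcard' : Fintype.card (s : Set (EuclideanSpace ℝ (Fin d))) = (d - 1) + 1 := by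
    simp only [Finset.coe_sort_coe, Fintype.card_coe]
    omega
  have hfrD : Module.finrank ℝ D = d - 1 := by
    have := hai.finrank_vectorSpan hcard'
    rwa [Subtype.range_coe] at this
  have hfrO : Module.finrank ℝ Dᗮ = 1 := by
    have h1 := Submodule.finrank_add_finrank_orthogonal (K := D)
    rw [hfrD, finrank_euclideanSpace_fin] at h1
    omega
  have hObot : Dᗮ ≠ ⊥ := by
    intro hb
    rw [hb, finrank_bot] at hfrO
    omega
  obtain ⟨u, humem, hu0⟩ := Submodule.exists_mem_ne_zero_of_ne_bot hObot
  set n : EuclideanSpace ℝ (Fin d) := ‖u‖⁻¹ • u with hn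
  have hn0 : n ≠ 0 := by
    rw [hn]
    simp [smul_eq_zero, hu0, norm_eq_zero]
  have hnorm : ‖n‖ = 1 := by
    rw [hn, norm_smul, norm_inv, norm_norm, inv_mul_cancel₀ (norm_ne_zero_iff.mpr hu0)]
  have hnmem : n ∈ Dᗮ := Submodule.smul_mem _ _ humem
  have hspan1 : (ℝ ∙ n) = Dᗮ := by
    apply Submodule.eq_of_le_of_finrank_eq
    · exact (Submodule.span_singleton_le_iff_mem n Dᗮ).mpr hnmem
    · rw [finrank_span_singleton hn0, hfrO]
  have hDD : (ℝ ∙ n)ᗮ = D := by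
    rw [hspan1, Submodule.orthogonal_orthogonal]
  have hpmem : p ∈ affineSpan ℝ (s : Set (EuclideanSpace ℝ (Fin d))) :=
    subset_affineSpan ℝ _ hp
  have hchar : ∀ x, x ∈ affineSpan ℝ (s : Set (EuclideanSpace ℝ (Fin d))) ↔ ⟪n, x⟫ = ⟪n, p⟫ := by
    intro x
    rw [← AffineSubspace.vsub_right_mem_direction_iff_mem hpmem, direction_affineSpan, ← hD, ← hDD]
    rw [Submodule.mem_orthogonal_singleton_iff_inner_right]
    constructor
    · intro h
      have : ⟪n, x -ᵥ p⟫ = ⟪n, x⟫ - ⟪n, p⟫ := by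
        simp [vsub_eq_sub, inner_sub_right]
      rw [this] at h
      linarith
    · intro h
      have : ⟪n, x -ᵥ p⟫ = ⟪n, x⟫ - ⟪n, p⟫ := by
        simp [vsub_eq_sub, inner_sub_right]
      rw [this, h]
      ring
  refine ⟨n, ⟪n, p⟫, hchar, ?_, ?_⟩
  · intro x
    apply le_antisymm
    · -- upper bound via explicit projection point
      set y : EuclideanSpace ℝ (Fin d) := x - (⟪n, x⟫ - ⟪n, p⟫) • n with hy
      have hymem : y ∈ affineSpan ℝ (s : Set (EuclideanSpace ℝ (Fin d))) := by
        rw [hchar, hy, inner_sub_right, real_inner_smul_right, real_inner_self_eq_norm_sq,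
          hnorm]
        ring
      calc Metric.infDist x ((affineSpan ℝ (s : Set (EuclideanSpace ℝ (Fin d)))) :
            Set (EuclideanSpace ℝ (Fin d))) ≤ dist x y :=
              Metric.infDist_le_dist_of_mem hymem
        _ = |⟪n, x⟫ - ⟪n, p⟫| := by
            rw [dist_eq_norm, hy, sub_sub_cancel, norm_smul, hnorm, mul_one,
              Real.norm_eq_abs]
    · -- lower bound
      haveI : Nonempty ((affineSpan ℝ (s : Set (EuclideanSpace ℝ (Fin d)))) :
          Set (EuclideanSpace ℝ (Fin d))) := ⟨⟨p, hpmem⟩⟩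
      rw [Metric.infDist_eq_iInf]
      apply le_ciInf
      intro z
      have hz : ⟪n, (z : EuclideanSpace ℝ (Fin d))⟫ = ⟪n, p⟫ := (hchar z).mp z.2
      calc |⟪n, x⟫ - ⟪n, p⟫| = |⟪n, x - z⟫| := by
            rw [inner_sub_right, hz]
        _ ≤ ‖n‖ * ‖x - (z : EuclideanSpace ℝ (Fin d))‖ := by
            exact abs_real_inner_le_norm _ _
        _ = dist x z := by rw [hnorm, one_mul, dist_eq_norm]
  · intro v hv
    rw [← hDD]
    exact Submodule.mem_orthogonal_singleton_iff_inner_right.mpr hv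

lemma facet_mem {d : ℕ} {P : Finset (EuclideanSpace ℝ (Fin d))}
    {a : Fin (d + 1) → EuclideanSpace ℝ (Fin d)} (ha : AffineIndependent ℝ a)
    (haP : ∀ i, a i ∈ P) (i : Fin (d + 1)) :
    Finset.image a ({i}ᶜ : Finset (Fin (d + 1))) ∈ hddSet d P := by
  classical
  have hinj : Function.Injective a := ha.injective
  rw [hddSet_mem]
  refine ⟨?_, ?_, ?_⟩
  · intro x hx
    obtain ⟨j, -, rfl⟩ := Finset.mem_image.mp hx
    exact haP j
  · rw [Finset.card_image_of_injective _ hinj, Finset.card_compl, Finset.card_singleton,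
      Fintype.card_fin]
    omega
  · have h1 : ((Finset.image a ({i}ᶜ : Finset (Fin (d + 1)))) :
        Set (EuclideanSpace ℝ (Fin d))) ⊆ Set.range a := by
      rw [Finset.coe_image]
      exact (Set.image_subset_range _ _)
    exact ha.range.mono h1

lemma facet_inter {d : ℕ} (hd : 1 ≤ d) {a : Fin (d + 1) → EuclideanSpace ℝ (Fin d)}
    (ha : AffineIndependent ℝ a) (v : EuclideanSpace ℝ (Fin d))
    (hv : ∀ i : Fin d, v ∈ vectorSpan ℝ
      ((Finset.image a ({i.succ}ᶜ : Finset (Fin (d + 1)))) : Set (EuclideanSpace ℝ (Fin d)))) :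
    v = 0 := by
  classical
  haveI : Nonempty {x : Fin (d + 1) // x ≠ 0} :=
    ⟨⟨⟨1, by omega⟩, by simp [Fin.ext_iff]⟩⟩
  have hli : LinearIndependent ℝ (fun j : {x : Fin (d + 1) // x ≠ 0} => a ↑j -ᵥ a 0) :=
    (affineIndependent_iff_linearIndependent_vsub ℝ a 0).mp ha
  have cardeq : Fintype.card {x : Fin (d + 1) // x ≠ 0} = d := by
    simp [Fintype.card_subtype_compl]
  have B := basisOfLinearIndependentOfCardEqFinrank hli
    (by rw [cardeq, finrank_euclideanSpace_fin])
  have coeB : ⇑(basisOfLinearIndependentOfCardEqFinrank hli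
      (by rw [cardeq, finrank_euclideanSpace_fin] :
        Fintype.card {x : Fin (d + 1) // x ≠ 0} =
          Module.finrank ℝ (EuclideanSpace ℝ (Fin d)))) =
      fun j : {x : Fin (d + 1) // x ≠ 0} => a ↑j -ᵥ a 0 :=
    coe_basisOfLinearIndependentOfCardEqFinrank _ _
  set B' := basisOfLinearIndependentOfCardEqFinrank hli
    (by rw [cardeq, finrank_euclideanSpace_fin] :
      Fintype.card {x : Fin (d + 1) // x ≠ 0} =
        Module.finrank ℝ (EuclideanSpace ℝ (Fin d))) with hB'
  have hmem : ∀ i : Fin d, v ∈ Submodule.span ℝ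
      (B' '' {j : {x : Fin (d + 1) // x ≠ 0} | (j : Fin (d + 1)) ≠ i.succ}) := by
    intro i
    have h0mem : a 0 ∈ ((Finset.image a ({i.succ}ᶜ : Finset (Fin (d + 1)))) :
        Set (EuclideanSpace ℝ (Fin d))) := by
      simp only [Finset.coe_image, Set.mem_image]
      exact ⟨0, by simp [Finset.mem_compl, (Fin.succ_ne_zero i).symm], rfl⟩
    have hvs := hv i
    rw [vectorSpan_eq_span_vsub_set_right ℝ h0mem] at hvs
    refine Submodule.span_le.mpr ?_ hvs
    rintro - ⟨w, hw, rfl⟩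
    simp only [Finset.coe_image, Set.mem_image] at hw
    obtain ⟨j, hj, rfl⟩ := hw
    have hj' : j ≠ i.succ := by
      simpa [Finset.mem_compl] using hj
    by_cases hj0 : j = 0
    · subst hj0
      simp only [vsub_self]
      exact Submodule.zero_mem _
    · apply Submodule.subset_span
      exact ⟨⟨j, hj0⟩, hj', by rw [coeB]⟩
  have hrepr : ∀ j : {x : Fin (d + 1) // x ≠ 0}, B'.repr v j = 0 := by
    intro j
    obtain ⟨i, hi⟩ : ∃ i : Fin d, i.succ = (j : Fin (d + 1)) :=
      ⟨(j : Fin (d + 1)).pred j.2, Fin.succ_pred _ _⟩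
    have hsupp := (B'.mem_span_image).mp (hmem i)
    by_contra hne
    have : j ∈ (B'.repr v).support := Finsupp.mem_support_iff.mpr hne
    have := hsupp this
    simp only [Set.mem_setOf_eq] at this
    exact this hi.symm
  have : B'.repr v = 0 := Finsupp.ext hrepr
  exact (LinearEquiv.map_eq_zero_iff B'.repr).mp this

/-- Hyperplane distance depth: the sum, over all hyperplanes determined by `P`,
of the Euclidean distance from `q` to the hyperplane. -/
noncomputable def hddDepth (d : ℕ) (P : Finset (EuclideanSpace ℝ (Fin d)))
    (q : EuclideanSpace ℝ (Fin d)) : ℝ :=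
  ∑ s ∈ hddSet d P,
    Metric.infDist q
      (affineSpan ℝ (s : Set (EuclideanSpace ℝ (Fin d))) : Set (EuclideanSpace ℝ (Fin d)))

/-- If `P` contains `d+1` affinely independent points, then some HDD median of `P`
is the unique intersection point of `d` hyperplanes determined by `P`. -/
theorem hddMedian_on_intersection (d : ℕ) (hd : 1 ≤ d)
    (P : Finset (EuclideanSpace ℝ (Fin d)))
    (h : ∃ a : Fin (d + 1) → EuclideanSpace ℝ (Fin d),
      AffineIndependent ℝ a ∧ ∀ i, a i ∈ P) :
    ∃ q : EuclideanSpace ℝ (Fin d),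
      (∀ x : EuclideanSpace ℝ (Fin d), hddDepth d P q ≤ hddDepth d P x) ∧
      ∃ s : Fin d → Finset (EuclideanSpace ℝ (Fin d)),
        (∀ i, s i ∈ hddSet d P) ∧
        (⋂ i, (affineSpan ℝ ((s i : Set (EuclideanSpace ℝ (Fin d)))) :
          Set (EuclideanSpace ℝ (Fin d)))) = {q} := by
  classical
  obtain ⟨a, ha, haP⟩ := h
  have hch : ∀ s : {s // s ∈ hddSet d P}, ∃ (n : EuclideanSpace ℝ (Fin d)) (c : ℝ),
      (∀ x, x ∈ affineSpan ℝ ((s : Finset (EuclideanSpace ℝ (Fin d))) :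
          Set (EuclideanSpace ℝ (Fin d))) ↔ ⟪n, x⟫ = c) ∧
      (∀ x, Metric.infDist x
          ((affineSpan ℝ ((s : Finset (EuclideanSpace ℝ (Fin d))) :
              Set (EuclideanSpace ℝ (Fin d)))) : Set (EuclideanSpace ℝ (Fin d))) =
            |⟪n, x⟫ - c|) ∧
      (∀ v, ⟪n, v⟫ = 0 → v ∈ vectorSpan ℝ ((s : Finset (EuclideanSpace ℝ (Fin d))) :
          Set (EuclideanSpace ℝ (Fin d)))) :=
    fun s => exists_normal hd s.2
  choose n c hchar hdist hperp using hch
  have hspan : Submodule.span ℝ (Set.range n) = ⊤ := by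
    rw [← Submodule.orthogonal_eq_bot_iff, Submodule.eq_bot_iff]
    intro v hvmem
    apply facet_inter hd ha v
    intro i
    have hfs := facet_mem ha haP i.succ
    have hinner : ⟪n ⟨_, hfs⟩, v⟫ = 0 :=
      (Submodule.mem_orthogonal _ v).mp hvmem _
        (Submodule.subset_span (⟨⟨_, hfs⟩, rfl⟩ : n ⟨_, hfs⟩ ∈ Set.range n))
    exact hperp ⟨_, hfs⟩ v hinner
  obtain ⟨q, hqmin, hqspan⟩ := hdd_abstract n c hspan
  have hdepth : ∀ x, hddDepth d P x = ∑ i : {s // s ∈ hddSet d P}, |⟪n i, x⟫ - c i| := by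
    intro x
    rw [hddDepth, ← Finset.sum_coe_sort (hddSet d P)]
    exact Finset.sum_congr rfl fun s _ => hdist s x
  refine ⟨q, ?_, ?_⟩
  · intro x
    rw [hdepth q, hdepth x]
    exact hqmin x
  · obtain ⟨bset, hbsub, hbspan, hbind⟩ :=
      exists_linearIndependent ℝ (n '' {i | ⟪n i, q⟫ = c i})
    rw [hqspan] at hbspan
    haveI : Fintype bset :=
      (Set.Finite.subset (Set.toFinite (n '' {i | ⟪n i, q⟫ = c i})) hbsub).fintype
    have hce : Fintype.card bset = d := by
      have h1 := finrank_span_set_eq_card hbind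
      rw [hbspan, finrank_top, finrank_euclideanSpace_fin] at h1
      rw [← Set.toFinset_card]
      omega
    set e := (Fintype.equivFinOfCardEq hce).symm with he
    have hchoose : ∀ k : Fin d, ∃ i : {s // s ∈ hddSet d P},
        ⟪n i, q⟫ = c i ∧ n i = (e k : EuclideanSpace ℝ (Fin d)) := by
      intro k
      obtain ⟨i, hi, hni⟩ := hbsub (e k).2
      exact ⟨i, hi, hni⟩
    choose sel hsel1 hsel2 using hchoose
    refine ⟨fun k => (sel k : Finset (EuclideanSpace ℝ (Fin d))),
      fun k => (sel k).2, ?_⟩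
    ext x
    simp only [Set.mem_iInter, Set.mem_singleton_iff, SetLike.mem_coe]
    constructor
    · intro hx
      have hxq : ∀ k : Fin d, ⟪n (sel k), x⟫ = c (sel k) :=
        fun k => (hchar (sel k) x).mp (hx k)
      have hle : Submodule.span ℝ bset ≤ (ℝ ∙ (x - q))ᗮ := by
        rw [Submodule.span_le]
        intro u hu
        apply Submodule.mem_orthogonal_singleton_iff_inner_right.mpr
        obtain ⟨k, hk⟩ := e.surjective ⟨u, hu⟩
        have hnu : n (sel k) = u := by rw [hsel2 k, hk]
        rw [← hnu, real_inner_comm, inner_sub_right, hxq k, hsel1 k, sub_self]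
      have hxm : x - q ∈ (ℝ ∙ (x - q))ᗮ := by
        apply hle
        rw [hbspan]
        exact Submodule.mem_top
      have := Submodule.mem_orthogonal_singleton_iff_inner_right.mp hxm
      have := inner_self_eq_zero.mp this
      exact sub_eq_zero.mp this
    · rintro rfl
      exact fun k => (hchar (sel k) _).mpr (hsel1 k)
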